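/- Let X ⊆ ℝ and 0 ≤ δ < 1. Suppose for every bounded open interval I we have μ*(X ∩ I) ≤ δ·|I|, where μ* is Lebesgue outer measure and |I| the length of I. Then μ*(X) = 0. -/

import Mathlib

open MeasureTheory

theorem local_density_null (X : Set ℝ) (δ : ℝ) (hδ0 : 0 ≤ δ) (hδ1 : δ < 1)
    (h : ∀ a b : ℝ, a < b →
      volume (X ∩ Set.Ioo a b) ≤ ENNReal.ofReal (δ * (b - a))) :
    volume X = 0 := by
  by_contra hX
  have hae := Besicovitch.ae_tendsto_measure_inter_div (volume : Measure ℝ) X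
  have hres : volume.restrict X Set.univ ≠ 0 := by
    rwa [Measure.restrict_apply_univ]
  have hne : volume.restrict X ≠ 0 := fun h0 => hres (by rw [h0]; simp)
  haveI := MeasureTheory.ae_neBot.mpr hne
  obtain ⟨x, hx⟩ := hae.exists
  have key : ∀ r : ℝ, 0 < r →
      volume (X ∩ Metric.closedBall x r) / volume (Metric.closedBall x r)
        ≤ ENNReal.ofReal δ := by
    intro r hr
    have hsub : X ∩ Metric.closedBall x r ⊆ (X ∩ Set.Ioo (x - r - 1) (x + r + 1)) := by
      intro y hy
      refine ⟨hy.1, ?_, ?_⟩ <;>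
        · have := hy.2
          rw [Metric.mem_closedBall, Real.dist_eq, abs_le] at this
          linarith [this.1, this.2]
    -- better bound: use Icc ⊆ Ioo ∪ endpoints
    have hIcc : Metric.closedBall x r = Set.Icc (x - r) (x + r) := Real.closedBall_eq_Icc
    have h1 : volume (X ∩ Metric.closedBall x r)
        ≤ volume (X ∩ Set.Ioo (x - r) (x + r)) + volume ({x - r, x + r} : Set ℝ) := by
      refine le_trans (measure_mono ?_) (measure_union_le _ _)
      intro y hy
      rcases hy with ⟨hyX, hyB⟩
      rw [hIcc] at hyB
      rcases eq_or_lt_of_le hyB.1 with h' | h'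
      · exact Or.inr (Or.inl h'.symm)
      rcases eq_or_lt_of_le hyB.2 with h'' | h''
      · exact Or.inr (Or.inr h'')
      · exact Or.inl ⟨hyX, h', h''⟩
    have h2 : volume ({x - r, x + r} : Set ℝ) = 0 :=
      (Set.toFinite _).measure_zero _
    have h3 : volume (X ∩ Metric.closedBall x r)
        ≤ ENNReal.ofReal (δ * (2 * r)) := by
      calc volume (X ∩ Metric.closedBall x r)
          ≤ volume (X ∩ Set.Ioo (x - r) (x + r)) := by rw [h2, add_zero] at h1; exact h1
        _ ≤ ENNReal.ofReal (δ * ((x + r) - (x - r))) := h _ _ (by linarith)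
        _ = ENNReal.ofReal (δ * (2 * r)) := by rw [show δ * ((x + r) - (x - r)) = δ * (2 * r) by ring]
    have hball : volume (Metric.closedBall x r) = ENNReal.ofReal (2 * r) := by
      rw [Real.volume_closedBall]
    rw [hball]
    rw [ENNReal.div_le_iff (by simp [hr]) ENNReal.ofReal_ne_top]
    calc volume (X ∩ Metric.closedBall x r) ≤ ENNReal.ofReal (δ * (2 * r)) := h3
      _ = ENNReal.ofReal δ * ENNReal.ofReal (2 * r) := by
          rw [ENNReal.ofReal_mul hδ0]
  have hev : ∀ᶠ r in nhdsWithin (0:ℝ) (Set.Ioi 0),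
      volume (X ∩ Metric.closedBall x r) / volume (Metric.closedBall x r)
        ≤ ENNReal.ofReal δ :=
    Filter.eventually_of_mem self_mem_nhdsWithin (fun r hr => key r hr)
  have : (1 : ENNReal) ≤ ENNReal.ofReal δ :=
    le_of_tendsto hx hev
  have : ENNReal.ofReal δ < 1 := by
    rw [ENNReal.ofReal_lt_one]; exact hδ1
  exact absurd ‹(1:ENNReal) ≤ ENNReal.ofReal δ› (not_le.mpr this)
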